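/- Let H be a complex Hadamard matrix of order mn whose rows and columns are each partitioned into n consecutive groups of size m, giving m × m blocks H_{ij} for 1 ≤ i,j ≤ n, and suppose H is of weak Bush type: J H_{ij} = H_{ij} J = δ_{ij} m J for all i, j, where J is the m × m all-ones matrix (equivalently, every row and every column of H_{ij} sums to m when i = j and to 0 when i ≠ j). Then for every index i₀ ∈ {1,…,n} and every c ∈ ℂ with |c| = 1, the matrix obtained from H by multiplying every entry of the diagonal block H_{i₀ i₀} by c is a complex Hadamard matrix of order mn. -/

import Mathlib

/-- Weak Bush-type switching: if a complex Hadamard matrix of order `mn`, with rows and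
columns indexed by `Fin n × Fin m` (block index, position), is of weak Bush type — every
row and column of the block `H_{ij}` sums to `m` if `i = j` and to `0` otherwise — then
multiplying all entries of a diagonal block `H_{i₀ i₀}` by a unimodular constant `c`
yields a complex Hadamard matrix of order `mn`. -/
theorem stmt_17 (m n : ℕ) (H : Matrix (Fin n × Fin m) (Fin n × Fin m) ℂ)
    (hent : ∀ p q, ‖H p q‖ = 1)
    (hHad : H * H.conjTranspose = ((m * n : ℕ) : ℂ) • 1)
    (hBushRow : ∀ (i j : Fin n) (t : Fin m),
      ∑ u : Fin m, H (i, t) (j, u) = if i = j then (m : ℂ) else 0)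
    (hBushCol : ∀ (i j : Fin n) (u : Fin m),
      ∑ t : Fin m, H (i, t) (j, u) = if i = j then (m : ℂ) else 0)
    (i₀ : Fin n) (c : ℂ) (hc : ‖c‖ = 1)
    (K : Matrix (Fin n × Fin m) (Fin n × Fin m) ℂ)
    (hK : ∀ (i j : Fin n) (t u : Fin m), K (i, t) (j, u) =
      if i = i₀ ∧ j = i₀ then c * H (i, t) (j, u) else H (i, t) (j, u)) :
    (∀ p q, ‖K p q‖ = 1) ∧
      K * K.conjTranspose = ((m * n : ℕ) : ℂ) • 1 := by
  have hcc : c * star c = 1 := by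
    rw [show (star c : ℂ) = (starRingEnd ℂ) c from rfl, Complex.mul_conj,
      Complex.normSq_eq_norm_sq, hc]
    norm_num
  -- the diagonal block is all ones
  have h1 : ∀ t v : Fin m, H (i₀, t) (i₀, v) = 1 := by
    intro t v
    have hsum := hBushRow i₀ i₀ t
    simp only [if_pos rfl] at hsum
    have hre : ∀ w : Fin m, (H (i₀, t) (i₀, w)).re ≤ 1 := by
      intro w
      calc (H (i₀, t) (i₀, w)).re ≤ ‖H (i₀, t) (i₀, w)‖ := Complex.re_le_norm _
        _ = 1 := hent _ _
    have hresum : ∑ w : Fin m, (H (i₀, t) (i₀, w)).re = m := by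
      have := congrArg Complex.re hsum
      simpa [Complex.re_sum] using this
    have hre1 : (H (i₀, t) (i₀, v)).re = 1 := by
      by_contra hne
      have hlt : (H (i₀, t) (i₀, v)).re < 1 := lt_of_le_of_ne (hre v) hne
      have : ∑ w : Fin m, (H (i₀, t) (i₀, w)).re < ∑ _w : Fin m, (1 : ℝ) :=
        Finset.sum_lt_sum (fun w _ => hre w) ⟨v, Finset.mem_univ v, hlt⟩
      simp [hresum] at this
    have hn : Complex.normSq (H (i₀, t) (i₀, v)) = 1 := by
      rw [← Complex.sq_norm, hent]; norm_num
    have him : (H (i₀, t) (i₀, v)).im = 0 := by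
      have h2 := Complex.normSq_apply (H (i₀, t) (i₀, v))
      nlinarith [h2, hn, hre1]
    exact Complex.ext (by simp [hre1]) (by simp [him])
  constructor
  · rintro ⟨i, t⟩ ⟨j, u⟩
    rw [hK]
    by_cases h : i = i₀ ∧ j = i₀
    · simp [h, map_mul, hc, hent]
    · simp [h, hent]
  · ext ⟨i, t⟩ ⟨j, u⟩
    rw [← hHad, Matrix.mul_apply, Matrix.mul_apply,
      Fintype.sum_prod_type, Fintype.sum_prod_type]
    apply Finset.sum_congr rfl
    intro k _
    by_cases hk : k = i₀
    · subst hk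
      have h1i : ∀ (i : Fin n), i = k → ∀ t v : Fin m, H (i, t) (k, v) = 1 := by
        rintro i rfl t v; exact h1 t v
      by_cases hi : i = k <;> by_cases hj : j = k
      · apply Finset.sum_congr rfl
        intro v _
        rw [Matrix.conjTranspose_apply, Matrix.conjTranspose_apply, hK, hK,
          if_pos ⟨hi, rfl⟩, if_pos ⟨hj, rfl⟩]
        calc c * H (i, t) (k, v) * star (c * H (j, u) (k, v))
            = (c * star c) * (H (i, t) (k, v) * star (H (j, u) (k, v))) := by
              rw [star_mul']; ring
          _ = H (i, t) (k, v) * star (H (j, u) (k, v)) := by rw [hcc, one_mul]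
      · -- i = k, j ≠ k : both inner sums are 0
        have hz : ∑ v : Fin m, star (H (j, u) (k, v)) = 0 := by
          have h0 : ∑ v : Fin m, H (j, u) (k, v) = 0 := by
            rw [hBushRow j k u, if_neg hj]
          calc ∑ v : Fin m, star (H (j, u) (k, v))
              = star (∑ v : Fin m, H (j, u) (k, v)) := by rw [star_sum]
            _ = 0 := by rw [h0, star_zero]
        have hL : ∀ v : Fin m,
            K (i, t) (k, v) * (K.conjTranspose (k, v) (j, u))
            = c * star (H (j, u) (k, v)) := by
          intro v
          rw [Matrix.conjTranspose_apply, hK, hK, if_pos ⟨hi, rfl⟩,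
            if_neg (fun h => hj h.1), h1i i hi, mul_one]
        have hR : ∀ v : Fin m,
            H (i, t) (k, v) * (H.conjTranspose (k, v) (j, u))
            = star (H (j, u) (k, v)) := by
          intro v
          rw [Matrix.conjTranspose_apply, h1i i hi, one_mul]
        simp only [hL, hR, ← Finset.mul_sum, hz, mul_zero]
      · -- i ≠ k, j = k
        have hz : ∑ v : Fin m, H (i, t) (k, v) = 0 := by
          rw [hBushRow i k t, if_neg hi]
        have hL : ∀ v : Fin m,
            K (i, t) (k, v) * (K.conjTranspose (k, v) (j, u))
            = star c * H (i, t) (k, v) := by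
          intro v
          rw [Matrix.conjTranspose_apply, hK, hK, if_neg (fun h => hi h.1),
            if_pos ⟨hj, rfl⟩, h1i j hj, mul_one, mul_comm]
        have hR : ∀ v : Fin m,
            H (i, t) (k, v) * (H.conjTranspose (k, v) (j, u))
            = H (i, t) (k, v) := by
          intro v
          rw [Matrix.conjTranspose_apply, h1i j hj, star_one, mul_one]
        simp only [hL, hR, ← Finset.mul_sum, hz, mul_zero]
      · apply Finset.sum_congr rfl
        intro v _
        rw [Matrix.conjTranspose_apply, Matrix.conjTranspose_apply, hK, hK,
          if_neg (fun h => hi h.1), if_neg (fun h => hj h.1)]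
    · apply Finset.sum_congr rfl
      intro v _
      rw [Matrix.conjTranspose_apply, Matrix.conjTranspose_apply, hK, hK,
        if_neg (fun h => hk h.2), if_neg (fun h => hk h.2)]
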